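/- arXiv:2404.11028 — 2 statements merged into one kernel-verified Lean document; each statement's English description precedes it below -/
import Mathlib

section
/- Let n ≥ 5 and let T be a triangulation of the n-gon containing exactly two chords of length 2 (exactly two ears). Then for every i with 2 ≤ i ≤ ⌈n/2⌉ − 1, T contains exactly two chords of length i, and, if n is even, T contains exactly one chord of length n/2 (a diameter). -/
open scoped Classical
set_option linter.unusedSectionVars false

/-- The cyclic distance between two vertices of the `n`-gon labeled by `ZMod n`:
`min (k, n - k)` where `k` is the representative of `b - a`. -/
def cycDist {n : ℕ} (a b : ZMod n) : ℕ := min (b - a).val (a - b).val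

/-- The length of an unordered pair of vertices (in particular, of a chord). -/
def chordLen {n : ℕ} (p : Sym2 (ZMod n)) : ℕ :=
  Sym2.lift ⟨fun a b => cycDist a b, fun _ _ => min_comm _ _⟩ p

/-- `x` lies strictly inside the clockwise arc from `a` to `b`. -/
def InArc {n : ℕ} (a b x : ZMod n) : Prop :=
  0 < (x - a).val ∧ (x - a).val < (b - a).val

/-- Two chords cross: their four endpoints are distinct and exactly one endpoint of the
second chord lies strictly inside the clockwise arc from `a` to `b`. -/
def Crosses {n : ℕ} (p q : Sym2 (ZMod n)) : Prop :=
  ∃ a b c d : ZMod n, p = s(a, b) ∧ q = s(c, d) ∧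
    a ≠ b ∧ a ≠ c ∧ a ≠ d ∧ b ≠ c ∧ b ≠ d ∧ c ≠ d ∧
    Xor' (InArc a b c) (InArc a b d)

/-- A triangulation of the `n`-gon: a set of `n - 3` pairwise non-crossing chords
(each chord having length at least 2). -/
def IsTriangulation (n : ℕ) (T : Finset (Sym2 (ZMod n))) : Prop :=
  T.card = n - 3 ∧ (∀ p ∈ T, 2 ≤ chordLen p) ∧
    ∀ p ∈ T, ∀ q ∈ T, p ≠ q → ¬ Crosses p q

/-- The total chord length of a triangulation. -/
def TCL (n : ℕ) (T : Finset (Sym2 (ZMod n))) : ℕ := ∑ p ∈ T, chordLen p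

/-- A diameter is a chord of length `n / 2` (only possible for `n` even). -/
def IsDiameter {n : ℕ} (p : Sym2 (ZMod n)) : Prop := 2 * chordLen p = n

/-- The chord `p` layers the boundary edge `{i, i + 1}`: the edge lies on the (strictly)
shorter of the two arcs between the endpoints of `p`.  (Diameters never layer an edge.) -/
def LayersEdge {n : ℕ} (p : Sym2 (ZMod n)) (i : ZMod n) : Prop :=
  ∃ a b : ZMod n, p = s(a, b) ∧ (b - a).val < (a - b).val ∧ (i - a).val < (b - a).val

/-- The doubled layer number of the boundary edge `{i, i + 1}`:
twice the number of non-diameter chords layering it, plus the number of diameters. -/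
noncomputable def mT (n : ℕ) (T : Finset (Sym2 (ZMod n))) (i : ZMod n) : ℕ :=
  2 * (T.filter (fun p => LayersEdge p i ∧ ¬ IsDiameter p)).card +
    (T.filter (fun p => IsDiameter p)).card

/-- Subdivision of a triangulation of the `n`-gon at the boundary edge `{n-1, 0}`:
re-embed all chords (via representatives in `{0, …, n-1}`) into the `(n+1)`-gon, whose new
vertex `n` lies between `n - 1` and `0`, and add the chord `{n - 1, 0}`. -/
def subdiv (n : ℕ) (T : Finset (Sym2 (ZMod n))) : Finset (Sym2 (ZMod (n + 1))) :=
  T.image (Sym2.map (fun a : ZMod n => ((a.val : ℕ) : ZMod (n + 1)))) ∪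
    {s(((n - 1 : ℕ) : ZMod (n + 1)), (0 : ZMod (n + 1)))}

/-- Doubling construction: subdivide every boundary edge of the `m`-gon (old vertex `a`
becomes `2a` in the `2m`-gon) and add the chord `{2a, 2a+2}` over each new vertex. -/
def doubleTri (m : ℕ) (T : Finset (Sym2 (ZMod m))) : Finset (Sym2 (ZMod (2 * m))) :=
  T.image (Sym2.map (fun a : ZMod m => ((2 * a.val : ℕ) : ZMod (2 * m)))) ∪
    (Finset.range m).image
      (fun a : ℕ => s(((2 * a : ℕ) : ZMod (2 * m)), ((2 * a + 2 : ℕ) : ZMod (2 * m))))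


section tool
variable {n : ℕ} [NeZero n]

lemma vinj {a b : ZMod n} (h : a.val = b.val) : a = b := ZMod.val_injective n h

lemma vne {a b : ZMod n} (h : a ≠ b) : a.val ≠ b.val := fun h' => h (vinj h')

lemma val_sub' (x y : ZMod n) :
    (x - y).val = if y.val ≤ x.val then x.val - y.val else x.val + n - y.val := by
  have hx := ZMod.val_lt x; have hy := ZMod.val_lt y
  rcases eq_or_ne y 0 with rfl | hy0
  · simp
  · have hyv : y.val ≠ 0 := by
      simpa [ZMod.val_eq_zero] using hy0
    have h1 : x - y = x + (-y) := by ring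
    rw [h1, ZMod.val_add, ZMod.neg_val, if_neg hy0]
    split
    · next h =>
        have h2 : x.val + (n - y.val) = (x.val - y.val) + n := by omega
        rw [h2, Nat.add_mod_right, Nat.mod_eq_of_lt (by omega)]
    · next h =>
        rw [Nat.mod_eq_of_lt (by omega)]
        omega

lemma chordLen_mk (a b : ZMod n) : chordLen s(a,b) = min (b-a).val (a-b).val := rfl

lemma canonRep (p : Sym2 (ZMod n)) :
    ∃ a b : ZMod n, p = s(a,b) ∧ chordLen p = (b-a).val ∧ (b-a).val ≤ (a-b).val := by
  induction p using Sym2.inductionOn with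
  | hf u w =>
    rcases le_total ((w-u).val) ((u-w).val) with h | h
    · exact ⟨u, w, rfl, by simp [chordLen_mk, min_eq_left h], h⟩
    · exact ⟨w, u, Sym2.eq_swap.symm, by simp [chordLen_mk, min_eq_right h, min_comm], h⟩

lemma arc_sum {a b : ZMod n} (h : a ≠ b) : (b-a).val + (a-b).val = n := by
  have h1 := vne h
  have hx := ZMod.val_lt a; have hy := ZMod.val_lt b
  rw [val_sub', val_sub']; split_ifs <;> omega

lemma chordLen_le (p : Sym2 (ZMod n)) : 2 * chordLen p ≤ n := by
  obtain ⟨a, b, rfl, h1, h2⟩ := canonRep p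
  rcases eq_or_ne a b with rfl | h
  · simp [chordLen_mk]
  · have := arc_sum h; omega
end tool

section tool2
variable {n : ℕ} [NeZero n]

lemma inarc_flip {a b x : ZMod n} (hab : a ≠ b) (hxa : x ≠ a) (hxb : x ≠ b) :
    InArc b a x ↔ ¬ InArc a b x := by
  have h1 := vne hab; have h2 := vne hxa; have h3 := vne hxb
  have ha := ZMod.val_lt a; have hb := ZMod.val_lt b; have hx := ZMod.val_lt x
  simp only [InArc, val_sub'] at *
  split_ifs <;> omega

lemma xor_flip {P Q : Prop} : Xor' (¬P) (¬Q) ↔ Xor' P Q := by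
  unfold Xor'; unfold Xor; tauto

lemma xor_core_swap {a b c d : ZMod n} (hab : a ≠ b) (hac : a ≠ c) (had : a ≠ d)
    (hbc : b ≠ c) (hbd : b ≠ d) :
    Xor' (InArc b a c) (InArc b a d) ↔ Xor' (InArc a b c) (InArc a b d) := by
  rw [inarc_flip hab hac.symm hbc.symm, inarc_flip hab had.symm hbd.symm, xor_flip]

lemma crosses_iff {a b c d : ZMod n} :
    Crosses s(a,b) s(c,d) ↔ (a ≠ b ∧ a ≠ c ∧ a ≠ d ∧ b ≠ c ∧ b ≠ d ∧ c ≠ d ∧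
      Xor' (InArc a b c) (InArc a b d)) := by
  constructor
  · rintro ⟨a', b', c', d', hp, hq, h1, h2, h3, h4, h5, h6, h7⟩
    rw [Sym2.eq_iff] at hp hq
    rcases hp with ⟨rfl, rfl⟩ | ⟨rfl, rfl⟩ <;> rcases hq with ⟨rfl, rfl⟩ | ⟨rfl, rfl⟩
    · exact ⟨h1, h2, h3, h4, h5, h6, h7⟩
    · exact ⟨h1, h3, h2, h5, h4, h6.symm, (xor_comm _ _).mp h7⟩
    · exact ⟨h1.symm, h4, h5, h2, h3, h6,
        (xor_core_swap h1.symm h4 h5 h2 h3).mp h7⟩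
    · exact ⟨h1.symm, h5, h4, h3, h2, h6.symm,
        (xor_core_swap h1.symm h5 h4 h3 h2).mp ((xor_comm _ _).mp h7)⟩
  · rintro ⟨h1, h2, h3, h4, h5, h6, h7⟩
    exact ⟨a, b, c, d, rfl, rfl, h1, h2, h3, h4, h5, h6, h7⟩

lemma crosses_symm {p q : Sym2 (ZMod n)} (h : Crosses p q) : Crosses q p := by
  induction p using Sym2.inductionOn with
  | hf a b =>
    induction q using Sym2.inductionOn with
    | hf c d =>
      rw [crosses_iff] at h ⊢
      obtain ⟨h1, h2, h3, h4, h5, h6, h7⟩ := h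
      refine ⟨h6, h2.symm, h4.symm, h3.symm, h5.symm, h1, ?_⟩
      have e1 := vne h1; have e2 := vne h2; have e3 := vne h3
      have e4 := vne h4; have e5 := vne h5; have e6 := vne h6
      have ha := ZMod.val_lt a; have hb := ZMod.val_lt b
      have hc := ZMod.val_lt c; have hd := ZMod.val_lt d
      simp only [InArc, Xor', Xor] at h7 ⊢
      simp only [val_sub'] at h7 ⊢
      split_ifs at h7 ⊢ <;> omega
end tool2

section tool3
variable {n : ℕ} [NeZero n]

lemma diam_cross (hn4 : 4 ≤ n) {p q : Sym2 (ZMod n)}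
    (hp : 2 * chordLen p = n) (hq : 2 * chordLen q = n) (hne : p ≠ q) :
    Crosses p q := by
  obtain ⟨a, b, rfl, hp1, hp2⟩ := canonRep p
  obtain ⟨c, d, rfl, hq1, hq2⟩ := canonRep q
  have hab : a ≠ b := by
    rintro rfl; simp_all; omega
  have hcd : c ≠ d := by
    rintro rfl; simp_all; omega
  have e1 : (b - a).val + (b - a).val = n := by
    have := arc_sum hab; omega
  have e2 : (d - c).val + (d - c).val = n := by
    have := arc_sum hcd; omega
  have k1 : ¬(a.val = c.val ∧ b.val = d.val) := by
    rintro ⟨u1, u2⟩; exact hne (by rw [vinj u1, vinj u2])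
  have k2 : ¬(a.val = d.val ∧ b.val = c.val) := by
    rintro ⟨u1, u2⟩
    exact hne (Sym2.eq_iff.mpr (Or.inr ⟨vinj u1, vinj u2⟩))
  have ha := ZMod.val_lt a; have hb := ZMod.val_lt b
  have hc := ZMod.val_lt c; have hd := ZMod.val_lt d
  have habv := vne hab; have hcdv := vne hcd
  rw [crosses_iff]
  have vac : a.val ≠ c.val := by
    simp only [val_sub'] at e1 e2; split_ifs at e1 e2 <;> omega
  have vad : a.val ≠ d.val := by
    simp only [val_sub'] at e1 e2; split_ifs at e1 e2 <;> omega
  have vbc : b.val ≠ c.val := by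
    simp only [val_sub'] at e1 e2; split_ifs at e1 e2 <;> omega
  have vbd : b.val ≠ d.val := by
    simp only [val_sub'] at e1 e2; split_ifs at e1 e2 <;> omega
  refine ⟨hab, fun h => vac (congrArg ZMod.val h), fun h => vad (congrArg ZMod.val h),
    fun h => vbc (congrArg ZMod.val h), fun h => vbd (congrArg ZMod.val h), hcd, ?_⟩
  simp only [InArc, Xor', Xor, val_sub'] at e1 e2 ⊢
  split_ifs at e1 e2 ⊢ <;> omega
end tool3

section del
variable {n : ℕ}

lemma del_len (hn : 5 ≤ n) {x y : ZMod n} (hx : x.val < n-1) (hy : y.val < n-1)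
    (hxy : x.val ≠ y.val)
    (hc : 2 ≤ cycDist x y)
    (h1 : y.val < x.val → x.val + 3 ≤ y.val + n)
    (h2 : x.val < y.val → y.val + 3 ≤ x.val + n) :
    2 ≤ cycDist ((x.val : ZMod (n-1))) ((y.val : ZMod (n-1))) := by
  haveI : NeZero n := ⟨by omega⟩
  haveI : NeZero (n-1) := ⟨by omega⟩
  have e1 : ((x.val : ZMod (n-1))).val = x.val := ZMod.val_cast_of_lt hx
  have e2 : ((y.val : ZMod (n-1))).val = y.val := ZMod.val_cast_of_lt hy
  unfold cycDist at hc ⊢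
  rw [val_sub', val_sub', e1, e2]
  rw [val_sub', val_sub'] at hc
  split_ifs at hc ⊢ <;> omega

lemma del_inarc (hn : 5 ≤ n) {a b x : ZMod n} (ha : a.val < n-1) (hb : b.val < n-1)
    (hx : x.val < n-1) :
    InArc ((a.val : ZMod (n-1))) ((b.val : ZMod (n-1))) ((x.val : ZMod (n-1))) ↔
      InArc a b x := by
  haveI : NeZero n := ⟨by omega⟩
  haveI : NeZero (n-1) := ⟨by omega⟩
  have e1 : ((a.val : ZMod (n-1))).val = a.val := ZMod.val_cast_of_lt ha
  have e2 : ((b.val : ZMod (n-1))).val = b.val := ZMod.val_cast_of_lt hb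
  have e3 : ((x.val : ZMod (n-1))).val = x.val := ZMod.val_cast_of_lt hx
  unfold InArc
  rw [val_sub', val_sub', e1, e2, e3, val_sub', val_sub']
  split_ifs <;> omega

lemma del_family (hn : 5 ≤ n) (H : Finset (Sym2 (ZMod n)))
    (hlen : ∀ p ∈ H, 2 ≤ chordLen p)
    (hcross : ∀ p ∈ H, ∀ q ∈ H, p ≠ q → ¬Crosses p q)
    (hvert : ∀ p ∈ H, ∀ x ∈ p, x.val < n - 1)
    (hwrap : ∀ p ∈ H, ∀ x ∈ p, ∀ y ∈ p, y.val < x.val → x.val + 3 ≤ y.val + n) :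
    ∃ H' : Finset (Sym2 (ZMod (n-1))), H'.card = H.card ∧
      (∀ p ∈ H', 2 ≤ chordLen p) ∧ (∀ p ∈ H', ∀ q ∈ H', p ≠ q → ¬Crosses p q) := by
  haveI : NeZero n := ⟨by omega⟩
  haveI : NeZero (n-1) := ⟨by omega⟩
  classical
  set ψ : ZMod n → ZMod (n-1) := fun z => ((z.val : ℕ) : ZMod (n-1)) with hψ
  have hψv : ∀ z : ZMod n, z.val < n-1 → (ψ z).val = z.val := by
    intro z hz; simpa [hψ] using ZMod.val_cast_of_lt hz
  refine ⟨H.image (Sym2.map ψ), ?_, ?_, ?_⟩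
  · -- card
    apply Finset.card_image_of_injOn
    intro p hp q hq hpq
    obtain ⟨x, y, rfl, -, -⟩ := canonRep p
    obtain ⟨z, w, rfl, -, -⟩ := canonRep q
    have mx := hvert _ hp x (by simp)
    have my := hvert _ hp y (by simp)
    have mz := hvert _ hq z (by simp)
    have mw := hvert _ hq w (by simp)
    simp only [Sym2.map_pair_eq, Sym2.eq_iff] at hpq ⊢
    rcases hpq with ⟨u1, u2⟩ | ⟨u1, u2⟩
    · exact Or.inl ⟨vinj (by rw [← hψv x mx, ← hψv z mz, u1]),
        vinj (by rw [← hψv y my, ← hψv w mw, u2])⟩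
    · exact Or.inr ⟨vinj (by rw [← hψv x mx, ← hψv w mw, u1]),
        vinj (by rw [← hψv y my, ← hψv z mz, u2])⟩
  · -- lengths
    intro P hP
    obtain ⟨p, hp, rfl⟩ := Finset.mem_image.mp hP
    obtain ⟨x, y, rfl, -, -⟩ := canonRep p
    have mx := hvert _ hp x (by simp)
    have my := hvert _ hp y (by simp)
    have hxy : x.val ≠ y.val := by
      intro h
      have : x = y := vinj h
      subst this
      have := hlen _ hp
      simp [chordLen_mk, sub_self] at this
    rw [Sym2.map_pair_eq]
    have := del_len hn mx my hxy (hlen _ hp)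
      (hwrap _ hp x (by simp) y (by simp)) (hwrap _ hp y (by simp) x (by simp))
    simpa [chordLen_mk, cycDist, hψ] using this
  · -- noncrossing
    intro P hP Q hQ hPQ hcr
    obtain ⟨p, hp, rfl⟩ := Finset.mem_image.mp hP
    obtain ⟨q, hq, rfl⟩ := Finset.mem_image.mp hQ
    obtain ⟨x, y, rfl, -, -⟩ := canonRep p
    obtain ⟨z, w, rfl, -, -⟩ := canonRep q
    have mx := hvert _ hp x (by simp)
    have my := hvert _ hp y (by simp)
    have mz := hvert _ hq z (by simp)
    have mw := hvert _ hq w (by simp)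
    rw [Sym2.map_pair_eq, Sym2.map_pair_eq, crosses_iff] at hcr
    obtain ⟨h1, h2, h3, h4, h5, h6, h7⟩ := hcr
    have n1 : x ≠ y := fun e => h1 (by rw [e])
    have n2 : x ≠ z := fun e => h2 (by rw [e])
    have n3 : x ≠ w := fun e => h3 (by rw [e])
    have n4 : y ≠ z := fun e => h4 (by rw [e])
    have n5 : y ≠ w := fun e => h5 (by rw [e])
    have n6 : z ≠ w := fun e => h6 (by rw [e])
    have hpq : s(x,y) ≠ s(z,w) := by
      intro e
      rw [e] at hPQ; exact hPQ rfl
    refine hcross _ hp _ hq hpq (crosses_iff.mpr ⟨n1, n2, n3, n4, n5, n6, ?_⟩)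
    have i1 := del_inarc hn mx my mz
    have i2 := del_inarc hn mx my mw
    simp only [hψ] at h7
    rw [i1, i2] at h7
    exact h7
end del

section rot
variable {n : ℕ} [NeZero n]

lemma rot_len (t : ZMod n) (p : Sym2 (ZMod n)) :
    chordLen (Sym2.map (· + t) p) = chordLen p := by
  induction p using Sym2.inductionOn with
  | hf a b => simp [Sym2.map_pair_eq, chordLen_mk, add_sub_add_right_eq_sub]

lemma rot_inarc (t a b x : ZMod n) : InArc (a+t) (b+t) (x+t) ↔ InArc a b x := by
  simp [InArc, add_sub_add_right_eq_sub]

lemma rot_cross_mp (t : ZMod n) {p q : Sym2 (ZMod n)} (h : Crosses p q) :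
    Crosses (Sym2.map (· + t) p) (Sym2.map (· + t) q) := by
  obtain ⟨a, b, c, d, hp, hq, h1, h2, h3, h4, h5, h6, h7⟩ := h
  refine ⟨a+t, b+t, c+t, d+t, by rw [hp]; simp [Sym2.map_pair_eq],
    by rw [hq]; simp [Sym2.map_pair_eq], fun e => h1 (add_right_cancel e),
    fun e => h2 (add_right_cancel e), fun e => h3 (add_right_cancel e),
    fun e => h4 (add_right_cancel e), fun e => h5 (add_right_cancel e),
    fun e => h6 (add_right_cancel e), ?_⟩
  rw [rot_inarc, rot_inarc]
  exact h7

lemma rot_cross (t : ZMod n) {p q : Sym2 (ZMod n)} :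
    Crosses (Sym2.map (· + t) p) (Sym2.map (· + t) q) ↔ Crosses p q := by
  refine ⟨fun h => ?_, rot_cross_mp t⟩
  have h2 := rot_cross_mp (-t) h
  rw [Sym2.map_map, Sym2.map_map] at h2
  have he : ((· + -t) ∘ (· + t)) = (id : ZMod n → ZMod n) := by
    funext z; simp
  rwa [he, Sym2.map_id, id_eq, id_eq] at h2
end rot

lemma noncross_bound : ∀ n : ℕ, 3 ≤ n → ∀ F : Finset (Sym2 (ZMod n)),
    (∀ p ∈ F, 2 ≤ chordLen p) → (∀ p ∈ F, ∀ q ∈ F, p ≠ q → ¬ Crosses p q) →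
    F.card ≤ n - 3 := by
  intro n
  induction n using Nat.strong_induction_on with
  | _ n IH =>
  intro hn3 F hlen hcross
  haveI : NeZero n := ⟨by omega⟩
  rcases F.eq_empty_or_nonempty with rfl | hFne
  · simp
  rcases Nat.lt_or_ge n 5 with hn5 | hn5
  · interval_cases n
    · obtain ⟨p, hp⟩ := hFne
      have h1 := chordLen_le p
      have h2 := hlen p hp
      omega
    · refine le_trans (Finset.card_le_one.mpr ?_) (by norm_num)
      intro p hp q hq
      by_contra hpq
      have d1 : 2 * chordLen p = 4 := by have := chordLen_le p; have := hlen p hp; omega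
      have d2 : 2 * chordLen q = 4 := by have := chordLen_le q; have := hlen q hq; omega
      exact hcross p hp q hq hpq (diam_cross (by norm_num) d1 d2 hpq)
  · obtain ⟨q, hqF, hmin⟩ := F.exists_min_image chordLen hFne
    obtain ⟨a, b, hqrep, hq1, hq2⟩ := canonRep q
    set k := chordLen q with hk
    have hk2 : 2 ≤ k := hlen q hqF
    have hkn : 2 * k ≤ n := chordLen_le q
    set t : ZMod n := ((n-2 : ℕ) : ZMod n) - a with ht
    set G := F.image (Sym2.map (· + t)) with hGdef
    have hGcard : G.card = F.card :=
      Finset.card_image_of_injective F (Sym2.map.injective (add_left_injective t))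
    have hlenG : ∀ p ∈ G, 2 ≤ chordLen p := by
      intro p hp; obtain ⟨r, hr, rfl⟩ := Finset.mem_image.mp hp
      rw [rot_len]; exact hlen r hr
    have hminG : ∀ p ∈ G, k ≤ chordLen p := by
      intro p hp; obtain ⟨r, hr, rfl⟩ := Finset.mem_image.mp hp
      rw [rot_len]; exact hmin r hr
    have hcrossG : ∀ p ∈ G, ∀ q' ∈ G, p ≠ q' → ¬ Crosses p q' := by
      intro p hp q' hq' hne hcr
      obtain ⟨r, hr, rfl⟩ := Finset.mem_image.mp hp
      obtain ⟨r', hr', rfl⟩ := Finset.mem_image.mp hq'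
      rw [rot_cross] at hcr
      exact hcross r hr r' hr' (fun e => hne (by rw [e])) hcr
    set a' : ZMod n := a + t with ha'
    set b' : ZMod n := b + t with hb'
    set Q : Sym2 (ZMod n) := s(a', b') with hQ
    have hQmap : Sym2.map (· + t) q = Q := by rw [hqrep, Sym2.map_pair_eq]
    have hQG : Q ∈ G := hQmap ▸ Finset.mem_image_of_mem _ hqF
    have hA : a'.val = n - 2 := by
      have h : a' = ((n-2:ℕ) : ZMod n) := by rw [ha', ht]; ring
      rw [h]; exact ZMod.val_cast_of_lt (by omega)
    have hB : (b' - a').val = k := by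
      rw [hb', ha', add_sub_add_right_eq_sub]; exact hq1.symm
    have hab' : a' ≠ b' := by
      intro e; rw [e, sub_self, ZMod.val_zero] at hB; omega
    have hBval : b'.val = k - 2 := by
      have h := val_sub' b' a'
      rw [hB] at h
      have hblt := ZMod.val_lt b'
      split_ifs at h <;> omega
    -- the erased family avoids vertex (n-1)
    have claim_vert : ∀ r ∈ G.erase Q, ∀ z ∈ r, z.val < n - 1 := by
      intro r hr z hz
      obtain ⟨hrQ, hrG⟩ := Finset.mem_erase.mp hr
      have hzlt := ZMod.val_lt z
      by_contra hcon
      have hzv : z.val = n - 1 := by omega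
      obtain ⟨w, rfl⟩ := Sym2.mem_iff_exists.mp hz
      have hwlt := ZMod.val_lt w
      have hzw : z ≠ w := by
        rintro rfl
        have := hlenG _ hrG
        simp [chordLen_mk, sub_self] at this
      have hwz : w.val ≠ n - 1 := by intro e; exact hzw (vinj (by omega))
      have hlen2 := hlenG _ hrG
      have hmin2 := hminG _ hrG
      rw [chordLen_mk] at hlen2 hmin2
      rcases (by omega : w.val = n - 2 ∨ w.val ≤ n - 3) with hw2 | hw3
      · -- chord of length 1
        have e2 : (z - w).val = 1 := by rw [val_sub']; split_ifs <;> omega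
        have : min (w-z).val (z-w).val ≤ 1 := le_trans (min_le_right _ _) (le_of_eq e2)
        omega
      · have e1 : (w - z).val = w.val + 1 := by rw [val_sub']; split_ifs <;> omega
        have hle : min (w-z).val (z-w).val ≤ w.val + 1 :=
          le_trans (min_le_left _ _) (le_of_eq e1)
        rcases Nat.lt_or_ge (w.val + 2) (k+1) with hcase | hcase
        · -- w.val + 2 ≤ k : shorter chord than minimal
          omega
        · -- crossing with Q
          have ez : (z - a').val = 1 := by rw [val_sub']; split_ifs <;> omega
          have ew : (w - a').val = w.val + 2 := by rw [val_sub']; split_ifs <;> omega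
          have inz : InArc a' b' z := ⟨by rw [ez]; omega, by rw [ez, hB]; omega⟩
          have inw : ¬ InArc a' b' w := by
            rintro ⟨u1, u2⟩; rw [ew, hB] at u2; omega
          have hQr : Q ≠ s(z, w) := fun e => hrQ e.symm
          refine hcrossG Q hQG _ hrG hQr (crosses_iff.mpr ⟨hab', ?_, ?_, ?_, ?_, hzw, Or.inl ⟨inz, inw⟩⟩)
          · intro e; have := congrArg ZMod.val e; omega
          · intro e; have := congrArg ZMod.val e; omega
          · intro e; have := congrArg ZMod.val e; rw [hBval] at this; omega
          · intro e; have := congrArg ZMod.val e; rw [hBval] at this; omega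
    have claim_wrap : ∀ r ∈ G.erase Q, ∀ x ∈ r, ∀ y ∈ r, y.val < x.val →
        x.val + 3 ≤ y.val + n := by
      intro r hr x hx y hy hyx
      by_contra hcon
      obtain ⟨hrQ, hrG⟩ := Finset.mem_erase.mp hr
      have hxlt := claim_vert r hr x hx
      have hylt := claim_vert r hr y hy
      have hy0 : y.val = 0 := by omega
      have hx2 : x.val = n - 2 := by omega
      have hxy : x ≠ y := by intro e; rw [e] at hyx; omega
      have hrxy : r = s(x,y) := (Sym2.mem_and_mem_iff hxy).mp ⟨hx, hy⟩
      have e1 : (y - x).val = 2 := by rw [val_sub']; split_ifs <;> omega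
      have hlen2 : chordLen r ≤ 2 := by
        rw [hrxy, chordLen_mk]
        exact le_trans (min_le_left _ _) (le_of_eq e1)
      have hmin2 := hminG r hrG
      have hkk : k = 2 := by omega
      have hxa : x = a' := vinj (by omega)
      have hyb : y = b' := vinj (by rw [hBval]; omega)
      exact hrQ (by rw [hrxy, hxa, hyb])
    obtain ⟨H', hc1, hc2, hc3⟩ := del_family hn5 (G.erase Q)
      (fun p hp => hlenG p (Finset.mem_erase.mp hp).2)
      (fun p hp q' hq' hne => hcrossG p (Finset.mem_erase.mp hp).2 q' (Finset.mem_erase.mp hq').2 hne)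
      claim_vert claim_wrap
    have hIH := IH (n-1) (by omega) (by omega) H' hc2 hc3
    have hQcard := Finset.card_erase_of_mem hQG
    have hGne : 1 ≤ G.card := by
      rw [hGcard]; exact Finset.card_pos.mpr hFne
    omega

lemma ear_in_arc {n : ℕ} (hn : 5 ≤ n) (T : Finset (Sym2 (ZMod n))) (hT : IsTriangulation n T) :
    ∀ k : ℕ, 2 ≤ k → 2*k ≤ n → ∀ a b : ZMod n, s(a,b) ∈ T → (b - a).val = k →
    ∃ x y : ZMod n, s(x,y) ∈ T ∧ (y - x).val = 2 ∧ (x - a).val + 2 ≤ k := by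
  haveI : NeZero n := ⟨by omega⟩
  intro k
  induction k using Nat.strong_induction_on with
  | _ k IHk =>
  intro hk2 hkn a b hab hval
  rcases eq_or_lt_of_le hk2 with hk2' | hk3
  · refine ⟨a, b, hab, by omega, ?_⟩
    rw [sub_self, ZMod.val_zero]; omega
  · by_cases hinner : ∃ m x y, 2 ≤ m ∧ m < k ∧ s(x,y) ∈ T ∧ (y - x).val = m ∧ (x - a).val + m ≤ k
    · obtain ⟨m, x, y, hm2, hmk, hxyT, hxyv, hxa⟩ := hinner
      obtain ⟨x', y', hT', hv', hx'⟩ := IHk m hmk hm2 (by omega) x y hxyT hxyv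
      refine ⟨x', y', hT', hv', ?_⟩
      have e : x' - a = (x' - x) + (x - a) := by ring
      have hle : (x' - a).val ≤ (x' - x).val + (x - a).val := by
        rw [e, ZMod.val_add]; exact Nat.mod_le _ _
      omega
    · exfalso
      set c : ZMod n := ((2:ℕ) : ZMod n) with hc
      set y0 : ZMod n := c + a with hy0def
      have hcval : c.val = 2 := ZMod.val_cast_of_lt (by omega)
      have hy0 : (y0 - a).val = 2 := by rw [hy0def, add_sub_cancel_right]; exact hcval
      have hay0 : a ≠ y0 := by
        intro e
        rw [← e, sub_self, ZMod.val_zero] at hy0; omega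
      have he_len : chordLen s(a, y0) = 2 := by
        have := arc_sum hay0
        rw [chordLen_mk]; omega
      have heT : s(a, y0) ∉ T := by
        intro h
        refine hinner ⟨2, a, y0, le_refl 2, hk3, h, hy0, ?_⟩
        rw [sub_self, ZMod.val_zero]; omega
      have hbav : (b - a).val = k := hval
      have key : ∀ u w : ZMod n, s(u,w) ∈ T → u ≠ w → a ≠ w → y0 ≠ w →
          InArc a y0 u → ¬ InArc a y0 w → False := by
        intro u w huwT huw haw hyw hin hout
        have hu : (u - a).val = 1 := by
          obtain ⟨p1, p2⟩ := hin
          rw [hy0] at p2; omega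
        have hs0 : (w - a).val ≠ 0 := by
          intro e
          exact haw ((sub_eq_zero.mp ((ZMod.val_eq_zero _).mp e)).symm ▸ rfl)
        have hs1 : (w - a).val ≠ 1 := by
          intro e
          exact huw (sub_left_inj.mp (vinj (by rw [e, hu])))
        have hs2 : (w - a).val ≠ 2 := by
          intro e
          exact hyw (sub_left_inj.mp (vinj (by rw [e, hy0])))
        have hs3 : 3 ≤ (w - a).val := by omega
        have hab' : a ≠ b := by
          intro e
          rw [e, sub_self, ZMod.val_zero] at hbav; omega
        rcases Nat.lt_or_ge k ((w - a).val) with hcase | hcase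
        · -- (w-a).val > k : crossing with s(a,b)
          have hne : s(a,b) ≠ s(u,w) := by
            intro e
            rcases Sym2.eq_iff.mp e with ⟨e1, e2⟩ | ⟨e1, e2⟩
            · rw [← e1, sub_self, ZMod.val_zero] at hu; omega
            · exact haw e1
          refine hT.2.2 _ hab _ huwT hne (crosses_iff.mpr ⟨hab', ?_, ?_, ?_, ?_, huw, ?_⟩)
          · intro e; rw [← e, sub_self, ZMod.val_zero] at hu; omega
          · exact haw
          · intro e; rw [← e] at hu; omega
          · intro e; rw [← e, hbav] at hcase; omega
          · refine Or.inl ⟨⟨by omega, by rw [hu, hbav]; omega⟩, ?_⟩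
            rintro ⟨p1, p2⟩
            rw [hbav] at p2; omega
        · -- (w-a).val ≤ k : inner chord s(u,w)
          have ew : (w - u).val = (w - a).val - 1 := by
            have e1 := val_sub' u a
            have e2 := val_sub' w a
            have e3 := val_sub' w u
            have h1 := ZMod.val_lt u
            have h2 := ZMod.val_lt w
            have h3 := ZMod.val_lt a
            rw [e1] at hu
            rw [e3]
            split_ifs at hu e2 ⊢ <;> omega
          refine hinner ⟨(w - a).val - 1, u, w, by omega, by omega, huwT, ew, ?_⟩
          rw [hu]; omega
      -- now use key on both Xor cases to rule out crossings with the new ear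
      have hnc : ∀ r ∈ T, ¬ Crosses s(a, y0) r := by
        intro r hr hcr
        obtain ⟨u, w, rfl, -, -⟩ := canonRep r
        rw [crosses_iff] at hcr
        obtain ⟨h1, h2, h3, h4, h5, h6, h7⟩ := hcr
        rcases h7 with ⟨hin, hout⟩ | ⟨hin, hout⟩
        · exact key u w hr h6 h3 h5 hin hout
        · exact key w u (Sym2.eq_swap ▸ hr) h6.symm h2 h4 hin hout
      have hFcard : (insert s(a, y0) T).card = T.card + 1 :=
        Finset.card_insert_of_notMem heT
      have hbound := noncross_bound n (by omega) (insert s(a, y0) T) ?_ ?_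
      · rw [hFcard, hT.1] at hbound; omega
      · intro p hp
        rcases Finset.mem_insert.mp hp with rfl | hp'
        · omega
        · exact hT.2.1 p hp'
      · intro p hp q' hq' hne hcr
        rcases Finset.mem_insert.mp hp with rfl | hp' <;>
          rcases Finset.mem_insert.mp hq' with rfl | hq''
        · exact hne rfl
        · exact hnc q' hq'' hcr
        · exact hnc p hp' (crosses_symm hcr)
        · exact hT.2.2 p hp' q' hq'' hne hcr

lemma shared_ear_cross {n : ℕ} [NeZero n] {i : ℕ} (hn5 : 5 ≤ n) (hi2 : 2 ≤ i) (hin : 2*i < n)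
    {a b c d x : ZMod n}
    (hab : (b - a).val = i) (hcd : (d - c).val = i)
    (hxa : (x - a).val + 2 ≤ i) (hxc : (x - c).val + 2 ≤ i)
    (hne : s(a,b) ≠ s(c,d)) :
    Crosses s(a,b) s(c,d) := by
  have hac : a ≠ c := by
    intro e; subst e
    have hbd : b = d := sub_left_inj.mp (vinj (by rw [hab, hcd]))
    exact hne (by rw [hbd])
  rw [crosses_iff]
  have la := ZMod.val_lt a; have lb := ZMod.val_lt b; have lc := ZMod.val_lt c
  have ld := ZMod.val_lt d; have lx := ZMod.val_lt x
  have vca := val_sub' c a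
  have vda := val_sub' d a
  have vba := val_sub' b a
  have vacv := vne hac
  rw [val_sub'] at hab hcd hxa hxc
  refine ⟨?_, hac, ?_, ?_, ?_, ?_, ?_⟩
  · intro e; have := congrArg ZMod.val e
    split_ifs at hab <;> omega
  · intro e; have := congrArg ZMod.val e
    split_ifs at hab hcd hxa hxc <;> omega
  · intro e; have := congrArg ZMod.val e
    split_ifs at hab hcd hxa hxc <;> omega
  · intro e; have := congrArg ZMod.val e
    split_ifs at hab hcd hxa hxc <;> omega
  · intro e; have := congrArg ZMod.val e
    split_ifs at hcd <;> omega
  · simp only [InArc, Xor', Xor]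
    rw [vca, vda, vba]
    split_ifs at hab hcd hxa hxc <;> split_ifs <;> omega

/-- For `n ≥ 5`, if a triangulation `T` of the `n`-gon has exactly two ears,
then for every `2 ≤ i ≤ ⌈n/2⌉ - 1` it contains exactly two chords of length `i`, and if `n` is
even it contains exactly one diameter. -/
theorem two_ears_chord_profile (n : ℕ) (hn : 5 ≤ n) (T : Finset (Sym2 (ZMod n)))
    (hT : IsTriangulation n T)
    (hears : (T.filter (fun p => chordLen p = 2)).card = 2) :
    (∀ i : ℕ, 2 ≤ i → i ≤ (n + 1) / 2 - 1 →
      (T.filter (fun p => chordLen p = i)).card = 2) ∧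
    (Even n → (T.filter (fun p => IsDiameter p)).card = 1) := by
  haveI : NeZero n := ⟨by omega⟩
  obtain ⟨hcard, hlen, hcross⟩ := hT
  -- ears have chord length 2
  have earlen : ∀ x y : ZMod n, (y - x).val = 2 → chordLen s(x,y) = 2 := by
    intro x y h
    have hxy : x ≠ y := by
      intro e; rw [e, sub_self, ZMod.val_zero] at h; omega
    have := arc_sum hxy.symm
    rw [chordLen_mk]; omega
  -- at most two chords of any non-diameter length
  have key2 : ∀ i : ℕ, 2 ≤ i → 2*i < n →
      (T.filter (fun p => chordLen p = i)).card ≤ 2 := by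
    intro i hi2 hi
    by_contra hgt
    push_neg at hgt
    obtain ⟨p1, hp1, p2, hp2, p3, hp3, h12, h13, h23⟩ := Finset.two_lt_card.mp hgt
    obtain ⟨hp1T, hp1l⟩ := Finset.mem_filter.mp hp1
    obtain ⟨hp2T, hp2l⟩ := Finset.mem_filter.mp hp2
    obtain ⟨hp3T, hp3l⟩ := Finset.mem_filter.mp hp3
    obtain ⟨a1, b1, rfl, hv1, -⟩ := canonRep p1
    obtain ⟨a2, b2, rfl, hv2, -⟩ := canonRep p2
    obtain ⟨a3, b3, rfl, hv3, -⟩ := canonRep p3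
    rw [hp1l] at hv1; rw [hp2l] at hv2; rw [hp3l] at hv3
    obtain ⟨x1, y1, he1T, he1v, he1p⟩ :=
      ear_in_arc hn T ⟨hcard, hlen, hcross⟩ i hi2 (by omega) a1 b1 hp1T hv1.symm
    obtain ⟨x2, y2, he2T, he2v, he2p⟩ :=
      ear_in_arc hn T ⟨hcard, hlen, hcross⟩ i hi2 (by omega) a2 b2 hp2T hv2.symm
    obtain ⟨x3, y3, he3T, he3v, he3p⟩ :=
      ear_in_arc hn T ⟨hcard, hlen, hcross⟩ i hi2 (by omega) a3 b3 hp3T hv3.symm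
    -- dedup helper : if two ears coincide their base points coincide
    have dedup : ∀ x y x' y' : ZMod n, (y - x).val = 2 → (y' - x').val = 2 →
        s(x,y) = s(x',y') → x = x' := by
      intro x y x' y' h h' he
      rcases Sym2.eq_iff.mp he with ⟨e1, e2⟩ | ⟨e1, e2⟩
      · exact e1
      · exfalso
        rw [← e1, ← e2] at h'
        have hxy : x ≠ y := by
          intro e; rw [e, sub_self, ZMod.val_zero] at h; omega
        have := arc_sum hxy
        omega
    -- pigeonhole among the three ears
    have hpig : s(x1,y1) = s(x2,y2) ∨ s(x1,y1) = s(x3,y3) ∨ s(x2,y2) = s(x3,y3) := by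
      by_contra hne3
      push_neg at hne3
      have h3 : 2 < (T.filter (fun p => chordLen p = 2)).card := by
        apply Finset.two_lt_card.mpr
        exact ⟨s(x1,y1), Finset.mem_filter.mpr ⟨he1T, earlen _ _ he1v⟩,
          s(x2,y2), Finset.mem_filter.mpr ⟨he2T, earlen _ _ he2v⟩,
          s(x3,y3), Finset.mem_filter.mpr ⟨he3T, earlen _ _ he3v⟩,
          hne3.1, hne3.2.1, hne3.2.2⟩
      omega
    rcases hpig with he | he | he
    · have hx := dedup _ _ _ _ he1v he2v he
      subst hx
      exact hcross _ hp1T _ hp2T h12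
        (shared_ear_cross hn hi2 hi hv1.symm hv2.symm he1p he2p h12)
    · have hx := dedup _ _ _ _ he1v he3v he
      subst hx
      exact hcross _ hp1T _ hp3T h13
        (shared_ear_cross hn hi2 hi hv1.symm hv3.symm he1p he3p h13)
    · have hx := dedup _ _ _ _ he2v he3v he
      subst hx
      exact hcross _ hp2T _ hp3T h23
        (shared_ear_cross hn hi2 hi hv2.symm hv3.symm he2p he3p h23)
  -- at most one diameter
  have key1 : (T.filter (fun p => 2 * chordLen p = n)).card ≤ 1 := by
    apply Finset.card_le_one.mpr
    intro p hp q hq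
    by_contra hpq
    obtain ⟨hpT, hpd⟩ := Finset.mem_filter.mp hp
    obtain ⟨hqT, hqd⟩ := Finset.mem_filter.mp hq
    exact hcross p hpT q hqT hpq (diam_cross (by omega) hpd hqd hpq)
  -- fiberwise decomposition
  set M := n / 2 with hM
  have hfib : T.card = ∑ i ∈ Finset.Icc 2 M, (T.filter (fun p => chordLen p = i)).card := by
    apply Finset.card_eq_sum_card_fiberwise
    intro p hp
    have h1 := hlen p hp
    have h2 := chordLen_le p
    simp only [Finset.mem_coe, Finset.mem_Icc]
    omega
  set g : ℕ → ℕ := fun i => if 2*i = n then 1 else 2 with hg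
  have hgsum : ∑ i ∈ Finset.Icc 2 M, g i = n - 3 := by
    rcases Nat.even_or_odd n with he | ho
    · obtain ⟨m, hm⟩ := he
      have hMeq : M = m := by omega
      have hsplit : Finset.Icc 2 M = insert M (Finset.Icc 2 (M-1)) := by
        ext j
        simp only [Finset.mem_Icc, Finset.mem_insert]
        omega
      rw [hsplit, Finset.sum_insert (by simp only [Finset.mem_Icc]; omega)]
      have hrest : ∑ i ∈ Finset.Icc 2 (M-1), g i = ∑ i ∈ Finset.Icc 2 (M-1), 2 := by
        apply Finset.sum_congr rfl
        intro j hj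
        simp only [Finset.mem_Icc] at hj
        simp only [hg]
        rw [if_neg (by omega)]
      rw [hrest, Finset.sum_const, smul_eq_mul, Nat.card_Icc]
      simp only [hg]
      rw [if_pos (by omega)]
      omega
    · have hrest : ∑ i ∈ Finset.Icc 2 M, g i = ∑ i ∈ Finset.Icc 2 M, 2 := by
        apply Finset.sum_congr rfl
        intro j hj
        simp only [Finset.mem_Icc] at hj
        simp only [hg]
        rw [if_neg (by rcases ho with ⟨m, hm⟩; omega)]
      rw [hrest, Finset.sum_const, smul_eq_mul, Nat.card_Icc]
      rcases ho with ⟨m, hm⟩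
      omega
  have hle : ∀ i ∈ Finset.Icc 2 M, (T.filter (fun p => chordLen p = i)).card ≤ g i := by
    intro i hi
    simp only [Finset.mem_Icc] at hi
    simp only [hg]
    split_ifs with hd
    · -- diameter length
      have : (T.filter (fun p => chordLen p = i)).card ≤
          (T.filter (fun p => 2 * chordLen p = n)).card := by
        apply Finset.card_le_card
        intro p hp
        obtain ⟨h1, h2⟩ := Finset.mem_filter.mp hp
        exact Finset.mem_filter.mpr ⟨h1, by rw [h2]; exact hd⟩
      omega
    · exact key2 i hi.1 (by omega)
  have heq : ∀ i ∈ Finset.Icc 2 M, (T.filter (fun p => chordLen p = i)).card = g i := by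
    apply (Finset.sum_eq_sum_iff_of_le hle).mp
    rw [← hfib, hgsum, hcard]
  constructor
  · intro i hi2 hiub
    have hiM : i ∈ Finset.Icc 2 M := by
      simp only [Finset.mem_Icc]; omega
    have := heq i hiM
    rw [this]
    simp only [hg]
    rw [if_neg (by omega)]
  · intro he
    obtain ⟨m, hm⟩ := he
    have hMI : M ∈ Finset.Icc 2 M := by
      simp only [Finset.mem_Icc]; omega
    have hfe : T.filter (fun p => IsDiameter p) = T.filter (fun p => chordLen p = M) := by
      apply Finset.filter_congr
      intro p hp
      unfold IsDiameter
      constructor <;> intro h <;> omega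
    rw [hfe, heq M hMI]
    simp only [hg]
    rw [if_pos (by omega)]
end

section
/- Let k ≥ 0 and let n = 3·2^k. There exists a triangulation T of the n-gon in which every boundary edge e satisfies m_T(e) = 2k (layer number exactly k), and consequently TCL(T) = n·k = n(k+2) − 3·2^{k+1}; in particular, for k ≥ 1 such a T is obtained from a triangulation of the 3·2^{k−1}-gon with all layer numbers at most k−1 by subdividing every boundary edge and adding the corresponding chord over each new vertex. -/
open scoped Classical

-- ===== helpers =====

lemma sub_val' {n : ℕ} (hn : 0 < n) (x y : ℕ) (hx : x ≤ n) :
    ((y : ZMod n) - (x : ZMod n)).val = (y + n - x) % n := by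
  have h : ((y : ZMod n)) - (x : ℕ) = ((y + n - x : ℕ) : ZMod n) := by
    rw [Nat.cast_sub (by omega), Nat.cast_add, ZMod.natCast_self]
    ring
  rw [h, ZMod.val_natCast]

lemma cast_inj' {n : ℕ} (x y : ℕ) : ((x : ZMod n) = (y : ZMod n)) ↔ x % n = y % n := by
  rw [ZMod.natCast_eq_natCast_iff]; rfl

lemma redm {n p q : ℕ} (hp : p < n) (hq : q < n) :
    (p + n - q) % n = if q ≤ p then p - q else p + n - q := by
  split_ifs with h
  · rw [show p + n - q = (p - q) + n by omega, Nat.add_mod_right,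
      Nat.mod_eq_of_lt (by omega)]
  · rw [Nat.mod_eq_of_lt (by omega)]

lemma zsub_val {n : ℕ} (hn : 0 < n) (u v : ZMod n) :
    (u - v).val = (u.val + n - v.val) % n := by
  haveI : NeZero n := ⟨by omega⟩
  have h1 : ((u.val : ℕ) : ZMod n) = u := by
    rw [ZMod.natCast_val, ZMod.cast_id]
  have h2 : ((v.val : ℕ) : ZMod n) = v := by
    rw [ZMod.natCast_val, ZMod.cast_id]
  have := sub_val' hn v.val u.val (le_of_lt (ZMod.val_lt v))
  rw [h1, h2] at this
  rw [this]

lemma vd_eq {n : ℕ} (x d : ℕ) (hd : 0 < d) (hdn : d < n) (hxd : x + d ≤ n) :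
    (((x + d : ℕ) : ZMod n) - (x : ZMod n)).val = d := by
  rw [sub_val' (by omega) x (x + d) (by omega),
    show x + d + n - x = d + n by omega, Nat.add_mod_right, Nat.mod_eq_of_lt hdn]

lemma vd_eq' {n : ℕ} (x d : ℕ) (hd : 0 < d) (hdn : d < n) (hxd : x + d ≤ n) :
    ((x : ZMod n) - ((x + d : ℕ) : ZMod n)).val = n - d := by
  rw [sub_val' (by omega) (x + d) x hxd,
    show x + n - (x + d) = n - d by omega, Nat.mod_eq_of_lt (by omega)]

lemma chordLen_ch {n : ℕ} (x d : ℕ) (hd : 0 < d) (h2 : 2 * d < n) (hxd : x + d ≤ n) :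
    chordLen (s((x : ZMod n), ((x + d : ℕ) : ZMod n))) = d := by
  simp only [chordLen, cycDist, Sym2.lift_mk,
    vd_eq x d hd (by omega) hxd, vd_eq' x d hd (by omega) hxd]
  omega

lemma inArc_iff' {n : ℕ} (x d w : ℕ) (hd : 0 < d) (hdlt : d < n) (hxd : x + d ≤ n) :
    InArc (x : ZMod n) ((x + d : ℕ) : ZMod n) ((w : ℕ) : ZMod n) ↔
      x < w % n ∧ w % n < x + d := by
  have hn : 0 < n := by omega
  have hvd : (((x + d : ℕ) : ZMod n) - (x : ZMod n)).val = d % n :=  by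
    rw [sub_val' hn x (x + d) (by omega),
      show x + d + n - x = d + n by omega, Nat.add_mod_right]
  have hw : ((w : ZMod n) - (x : ZMod n)).val = (w % n + n - x) % n := by
    rw [sub_val' hn x w (by omega)]
    conv_lhs => rw [← Nat.mod_add_div w n]
    rw [Nat.add_sub_assoc (by omega), Nat.add_right_comm, Nat.add_mul_mod_self_left,
      ← Nat.add_sub_assoc (by omega)]
  have hwn : w % n < n := Nat.mod_lt _ hn
  have hdn : d % n = d := Nat.mod_eq_of_lt hdlt
  rw [InArc, hvd, hw, hdn]
  have e := redm hwn (show x < n by omega)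
  rcases le_or_gt x (w % n) with h | h
  · rw [if_pos h] at e
    rw [e]
    generalize w % n = W at *
    omega
  · rw [if_neg (by omega)] at e
    rw [e]
    generalize w % n = W at *
    omega

lemma arc_compl {n : ℕ} (hn : 0 < n) (a b x : ZMod n) (hab : a ≠ b) (hxa : x ≠ a)
    (hxb : x ≠ b) : InArc b a x ↔ ¬ InArc a b x := by
  haveI : NeZero n := ⟨by omega⟩
  have hva : a.val < n := ZMod.val_lt a
  have hvb : b.val < n := ZMod.val_lt b
  have hvx : x.val < n := ZMod.val_lt x
  have hab' : a.val ≠ b.val := fun h => hab (ZMod.val_injective _ h)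
  have hxa' : x.val ≠ a.val := fun h => hxa (ZMod.val_injective _ h)
  have hxb' : x.val ≠ b.val := fun h => hxb (ZMod.val_injective _ h)
  rw [InArc, InArc, zsub_val hn x a, zsub_val hn b a, zsub_val hn x b, zsub_val hn a b,
    redm hvx hva, redm hvb hva, redm hvx hvb, redm hva hvb]
  split_ifs <;> omega

lemma noCross {n : ℕ} (hn : 0 < n) (u v c d : ZMod n)
    (h : c ≠ u → c ≠ v → d ≠ u → d ≠ v → (InArc u v c ↔ InArc u v d)) :
    ¬ Crosses s(u, v) s(c, d) := by
  rintro ⟨a, b, c', d', hp, hq, hab, hac, had, hbc, hbd, hcd, hx⟩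
  rw [Sym2.eq_iff] at hp hq
  have hswap : Xor' (InArc a b c) (InArc a b d) ∧ a ≠ c ∧ a ≠ d ∧ b ≠ c ∧ b ≠ d := by
    rcases hq with ⟨hc, hd⟩ | ⟨hc, hd⟩
    · subst hc; subst hd; exact ⟨hx, hac, had, hbc, hbd⟩
    · subst hc; subst hd
      refine ⟨?_, had, hac, hbd, hbc⟩
      rcases hx with ⟨p, q⟩ | ⟨p, q⟩
      · exact Or.inr ⟨p, q⟩
      · exact Or.inl ⟨p, q⟩
  obtain ⟨hx2, hac2, had2, hbc2, hbd2⟩ := hswap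
  rcases hp with ⟨ha, hb⟩ | ⟨ha, hb⟩
  · subst ha; subst hb
    have hiff := h hac2.symm hbc2.symm had2.symm hbd2.symm
    rcases hx2 with ⟨p, q⟩ | ⟨p, q⟩ <;> tauto
  · subst ha; subst hb
    have hiff := h hbc2.symm hac2.symm hbd2.symm had2.symm
    rw [arc_compl hn u v c hab.symm hbc2.symm hac2.symm,
      arc_compl hn u v d hab.symm hbd2.symm had2.symm] at hx2
    rcases hx2 with ⟨p, q⟩ | ⟨p, q⟩ <;> tauto

lemma chords_noCross {n : ℕ} (x d x' d' : ℕ)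
    (hd : 0 < d) (hd' : 0 < d') (hdlt : d < n) (hxd : x + d ≤ n) (hxd' : x' + d' ≤ n)
    (htri : x' + d' ≤ x ∨ x + d ≤ x' ∨ (x ≤ x' ∧ x' + d' ≤ x + d) ∨
      (x' ≤ x ∧ x + d ≤ x' + d')) :
    ¬ Crosses (s((x : ZMod n), ((x + d : ℕ) : ZMod n)))
      (s((x' : ZMod n), ((x' + d' : ℕ) : ZMod n))) := by
  have hn : 0 < n := by omega
  apply noCross hn
  intro h1 h2 h3 h4
  rw [Ne, cast_inj'] at h1 h2 h3 h4
  rw [inArc_iff' x d x' hd hdlt hxd, inArc_iff' x d (x' + d') hd hdlt hxd]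
  have e1 : x % n = x := Nat.mod_eq_of_lt (by omega)
  have e2 : x' % n = x' := Nat.mod_eq_of_lt (by omega)
  rw [e1] at h1 h3
  rw [e2] at h1 h2 ⊢
  rcases eq_or_lt_of_le hxd with h | h
  · have f2 : (x + d) % n = 0 := by rw [h, Nat.mod_self]
    rw [f2] at h2 h4
    rcases eq_or_lt_of_le hxd' with g | g
    · have g2 : (x' + d') % n = 0 := by rw [g, Nat.mod_self]
      rw [g2] at h3 h4 ⊢
      omega
    · have g2 : (x' + d') % n = x' + d' := Nat.mod_eq_of_lt g
      rw [g2] at h3 h4 ⊢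
      omega
  · have f2 : (x + d) % n = x + d := Nat.mod_eq_of_lt h
    rw [f2] at h2 h4
    rcases eq_or_lt_of_le hxd' with g | g
    · have g2 : (x' + d') % n = 0 := by rw [g, Nat.mod_self]
      rw [g2] at h3 h4 ⊢
      omega
    · have g2 : (x' + d') % n = x' + d' := Nat.mod_eq_of_lt g
      rw [g2] at h3 h4 ⊢
      omega

-- continuation (appended to part1 for testing)

lemma eq_of_cast_eq_lt {n x y : ℕ} (h : (x : ZMod n) = y) (hx : x < n) (hy : y < n) :
    x = y := by
  rw [cast_inj', Nat.mod_eq_of_lt hx, Nat.mod_eq_of_lt hy] at h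
  exact h

lemma eq_of_cast_eq_pos {n x y : ℕ} (h : (x : ZMod n) = y) (hx : 0 < x) (hx' : x ≤ n)
    (hy : 0 < y) (hy' : y ≤ n) : x = y := by
  rw [cast_inj'] at h
  rcases eq_or_lt_of_le hx' with h1 | h1 <;> rcases eq_or_lt_of_le hy' with h2 | h2
  · omega
  · rw [h1, Nat.mod_self, Nat.mod_eq_of_lt h2] at h; omega
  · rw [h2, Nat.mod_self, Nat.mod_eq_of_lt h1] at h; omega
  · rw [Nat.mod_eq_of_lt h1, Nat.mod_eq_of_lt h2] at h; omega

def ch (n x y : ℕ) : Sym2 (ZMod n) := s((x : ZMod n), (y : ZMod n))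

lemma ch_inj {n : ℕ} (x d x' d' : ℕ) (hd : 0 < d) (hd' : 0 < d') (hxd : x + d ≤ n)
    (hxd' : x' + d' ≤ n) (hsum : d + d' < n)
    (h : ch n x (x + d) = ch n x' (x' + d')) : x = x' ∧ d = d' := by
  rw [ch, ch, Sym2.eq_iff] at h
  rcases h with ⟨h1, h2⟩ | ⟨h1, h2⟩
  · have e1 : x = x' := eq_of_cast_eq_lt h1 (by omega) (by omega)
    have e2 : x + d = x' + d' := eq_of_cast_eq_pos h2 (by omega) hxd (by omega) hxd'
    omega
  · exfalso
    rw [cast_inj'] at h1 h2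
    have hc : x' ≡ x' + (d' + d) [MOD n] := by
      have h1' : x + d ≡ x' + d' + d [MOD n] := Nat.ModEq.add_right d h1
      have := (Nat.ModEq.symm h2).trans h1'
      calc x' ≡ x + d [MOD n] := Nat.ModEq.symm h2
        _ ≡ x' + d' + d [MOD n] := h1'
        _ = x' + (d' + d) := by omega
    have hdvd : n ∣ d' + d := by
      have := (Nat.modEq_iff_dvd' (by omega)).mp hc
      rwa [show x' + (d' + d) - x' = d' + d by omega] at this
    have := Nat.le_of_dvd (by omega) hdvd
    omega

-- the triangulation
def level (k t : ℕ) : Finset (Sym2 (ZMod (3 * 2 ^ k))) :=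
  (Finset.range (3 * 2 ^ (k - t))).image
    (fun a => ch (3 * 2 ^ k) (2 ^ t * a) (2 ^ t * a + 2 ^ t))

def balT (k : ℕ) : Finset (Sym2 (ZMod (3 * 2 ^ k))) :=
  (Finset.Icc 1 k).biUnion (level k)

lemma pow_le_aux {k t : ℕ} (ht : t ≤ k) : 2 * 2 ^ t < 3 * 2 ^ k := by
  have h1 : 2 ^ t ≤ 2 ^ k := Nat.pow_le_pow_right (by norm_num) ht
  have h2 : 0 < 2 ^ k := pow_pos (by norm_num) _
  omega

lemma bound_x {k t a : ℕ} (ht : t ≤ k) (ha : a < 3 * 2 ^ (k - t)) :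
    2 ^ t * a + 2 ^ t ≤ 3 * 2 ^ k := by
  have h1 : 2 ^ t * a + 2 ^ t = 2 ^ t * (a + 1) := by ring
  have h2 : 2 ^ t * (a + 1) ≤ 2 ^ t * (3 * 2 ^ (k - t)) :=
    Nat.mul_le_mul_left _ (by omega)
  have h3 : 2 ^ t * (3 * 2 ^ (k - t)) = 3 * 2 ^ k := by
    rw [mul_left_comm, ← pow_add, Nat.add_sub_cancel' ht]
  omega

lemma mem_balT {k : ℕ} {p : Sym2 (ZMod (3 * 2 ^ k))} :
    p ∈ balT k ↔ ∃ t a, 1 ≤ t ∧ t ≤ k ∧ a < 3 * 2 ^ (k - t) ∧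
      p = ch (3 * 2 ^ k) (2 ^ t * a) (2 ^ t * a + 2 ^ t) := by
  simp only [balT, level, Finset.mem_biUnion, Finset.mem_Icc, Finset.mem_image,
    Finset.mem_range]
  constructor
  · rintro ⟨t, ⟨h1, h2⟩, a, ha, rfl⟩
    exact ⟨t, a, h1, h2, ha, rfl⟩
  · rintro ⟨t, a, h1, h2, ha, rfl⟩
    exact ⟨t, ⟨h1, h2⟩, a, ha, rfl⟩

lemma level_card {k t : ℕ} (ht1 : 1 ≤ t) (ht : t ≤ k) :
    (level k t).card = 3 * 2 ^ (k - t) := by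
  rw [level, Finset.card_image_of_injOn, Finset.card_range]
  intro a ha b hb hab
  simp only [Finset.coe_range, Set.mem_Iio] at ha hb
  have := ch_inj (n := 3 * 2 ^ k) (2 ^ t * a) (2 ^ t) (2 ^ t * b) (2 ^ t)
    (pow_pos (by norm_num) _) (pow_pos (by norm_num) _)
    (bound_x ht ha) (bound_x ht hb) (by have := pow_le_aux ht; omega) hab
  have h2 : 0 < 2 ^ t := pow_pos (by norm_num) _
  exact Nat.eq_of_mul_eq_mul_left h2 this.1

lemma level_disj {k : ℕ} : ∀ t ∈ Finset.Icc 1 k, ∀ s ∈ Finset.Icc 1 k, t ≠ s →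
    Disjoint (level k t) (level k s) := by
  intro t ht s hs hts
  rw [Finset.mem_Icc] at ht hs
  rw [Finset.disjoint_left]
  rintro p hp hq
  simp only [level, Finset.mem_image, Finset.mem_range] at hp hq
  obtain ⟨a, ha, rfl⟩ := hp
  obtain ⟨b, hb, he⟩ := hq
  have := ch_inj (n := 3 * 2 ^ k) (2 ^ s * b) (2 ^ s) (2 ^ t * a) (2 ^ t)
    (pow_pos (by norm_num) _) (pow_pos (by norm_num) _)
    (bound_x hs.2 hb) (bound_x ht.2 ha)
    (by have := pow_le_aux ht.2; have := pow_le_aux hs.2;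
        have h1 : 2 ^ s ≤ 2 ^ k := Nat.pow_le_pow_right (by norm_num) hs.2
        have h2 : 2 ^ t ≤ 2 ^ k := Nat.pow_le_pow_right (by norm_num) ht.2
        have h3 : 0 < 2 ^ k := pow_pos (by norm_num) _
        omega) he
  exact hts ((Nat.pow_right_injective (a := 2) (by norm_num) this.2).symm)

lemma sum_geo (k : ℕ) : ∑ t ∈ Finset.Icc 1 k, 3 * 2 ^ (k - t) = 3 * 2 ^ k - 3 := by
  induction k with
  | zero => rw [Finset.Icc_eq_empty (by omega)]; simp
  | succ k ih =>
    rw [Finset.sum_Icc_succ_top (by omega)]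
    have h1 : ∑ t ∈ Finset.Icc 1 k, 3 * 2 ^ (k + 1 - t) =
        ∑ t ∈ Finset.Icc 1 k, (3 * 2 ^ (k - t)) * 2 := by
      apply Finset.sum_congr rfl
      intro t ht
      rw [Finset.mem_Icc] at ht
      rw [show k + 1 - t = (k - t) + 1 by omega, pow_succ]
      ring
    rw [h1, ← Finset.sum_mul, ih]
    have h2 : 0 < 2 ^ k := pow_pos (by norm_num) _
    have h3 : 2 ^ (k + 1) = 2 * 2 ^ k := by rw [pow_succ]; ring
    rw [Nat.sub_self, pow_zero]
    omega

lemma balT_card (k : ℕ) : (balT k).card = 3 * 2 ^ k - 3 := by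
  rw [balT, Finset.card_biUnion level_disj]
  rw [← sum_geo k]
  apply Finset.sum_congr rfl
  intro t ht
  rw [Finset.mem_Icc] at ht
  exact level_card ht.1 ht.2

-- ===== trichotomy =====

lemma dyadic_aux (e m d a b : ℕ) (he : 0 < e) (hm : 0 < m) (hd : d = e * m) :
    e * b + e ≤ d * a ∨ d * a + d ≤ e * b ∨ (d * a ≤ e * b ∧ e * b + e ≤ d * a + d) := by
  subst hd
  have k3 : e * (m * a) = e * m * a := by ring
  rcases Nat.lt_or_ge b (m * a) with h | h
  · left
    have k1 : e * (b + 1) ≤ e * (m * a) := Nat.mul_le_mul_left e (by omega)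
    have k2 : e * (b + 1) = e * b + e := by ring
    omega
  · rcases Nat.lt_or_ge b (m * a + m) with h2 | h2
    · right; right
      have k1 : e * (m * a) ≤ e * b := Nat.mul_le_mul_left e h
      have k2 : e * (b + 1) ≤ e * (m * a + m) := Nat.mul_le_mul_left e (by omega)
      have k4 : e * (b + 1) = e * b + e := by ring
      have k5 : e * (m * a + m) = e * m * a + e * m := by ring
      omega
    · right; left
      have k1 : e * (m * a + m) ≤ e * b := Nat.mul_le_mul_left e h2
      have k5 : e * (m * a + m) = e * m * a + e * m := by ring
      omega

lemma dyadic_tri (d e a b : ℕ) (hdvd : e ∣ d ∨ d ∣ e) (hd : 0 < d) (he : 0 < e) :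
    e * b + e ≤ d * a ∨ d * a + d ≤ e * b ∨ (d * a ≤ e * b ∧ e * b + e ≤ d * a + d) ∨
      (e * b ≤ d * a ∧ d * a + d ≤ e * b + e) := by
  rcases hdvd with ⟨m, hm⟩ | ⟨m, hm⟩
  · have hm0 : 0 < m := by
      rcases Nat.eq_zero_or_pos m with h | h
      · subst h; rw [mul_zero] at hm; omega
      · exact h
    have H := dyadic_aux e m d a b he hm0 hm
    tauto
  · have hm0 : 0 < m := by
      rcases Nat.eq_zero_or_pos m with h | h
      · subst h; rw [mul_zero] at hm; omega
      · exact h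
    have H := dyadic_aux d m e b a hd hm0 hm
    tauto

-- ===== balT properties =====

lemma balT_isTri (k : ℕ) :
    (balT k).card = 3 * 2 ^ k - 3 ∧ (∀ p ∈ balT k, 2 ≤ chordLen p) ∧
      ∀ p ∈ balT k, ∀ q ∈ balT k, p ≠ q → ¬ Crosses p q := by
  refine ⟨balT_card k, ?_, ?_⟩
  · intro p hp
    obtain ⟨t, a, ht1, ht2, ha, rfl⟩ := mem_balT.mp hp
    have h2 : 2 * 2 ^ t < 3 * 2 ^ k := pow_le_aux ht2
    have hlen : chordLen (ch (3 * 2 ^ k) (2 ^ t * a) (2 ^ t * a + 2 ^ t)) = 2 ^ t :=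
      chordLen_ch (2 ^ t * a) (2 ^ t) (pow_pos (by norm_num) _) h2
        (bound_x ht2 ha)
    rw [hlen]
    calc 2 = 2 ^ 1 := (pow_one 2).symm
    _ ≤ 2 ^ t := Nat.pow_le_pow_right (by norm_num) ht1
  · intro p hp q hq _
    obtain ⟨t, a, ht1, ht2, ha, rfl⟩ := mem_balT.mp hp
    obtain ⟨s, b, hs1, hs2, hb, rfl⟩ := mem_balT.mp hq
    exact chords_noCross (2 ^ t * a) (2 ^ t) (2 ^ s * b) (2 ^ s)
      (pow_pos (by norm_num) _) (pow_pos (by norm_num) _)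
      (by have := pow_le_aux ht2; omega)
      (bound_x ht2 ha) (bound_x hs2 hb)
      (by
        rcases le_total t s with h | h
        · exact dyadic_tri (2 ^ t) (2 ^ s) a b (Or.inr (pow_dvd_pow 2 h))
            (pow_pos (by norm_num) _) (pow_pos (by norm_num) _)
        · exact dyadic_tri (2 ^ t) (2 ^ s) a b (Or.inl (pow_dvd_pow 2 h))
            (pow_pos (by norm_num) _) (pow_pos (by norm_num) _))

lemma balT_tcl (k : ℕ) : ∑ p ∈ balT k, chordLen p = 3 * 2 ^ k * k := by
  rw [balT, Finset.sum_biUnion (fun x hx y hy hxy => level_disj x hx y hy hxy)]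
  have hinner : ∀ t ∈ Finset.Icc 1 k, ∑ p ∈ level k t, chordLen p = 3 * 2 ^ k := by
    intro t ht
    rw [Finset.mem_Icc] at ht
    rw [level, Finset.sum_image]
    · have : ∀ a ∈ Finset.range (3 * 2 ^ (k - t)),
          chordLen (ch (3 * 2 ^ k) (2 ^ t * a) (2 ^ t * a + 2 ^ t)) = 2 ^ t := by
        intro a ha
        rw [Finset.mem_range] at ha
        exact chordLen_ch (2 ^ t * a) (2 ^ t) (pow_pos (by norm_num) _)
          (pow_le_aux ht.2) (bound_x ht.2 ha)
      rw [Finset.sum_congr rfl this, Finset.sum_const, Finset.card_range, smul_eq_mul,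
        mul_assoc, ← pow_add, Nat.sub_add_cancel ht.2]
    · intro a ha b hb hab
      rw [Finset.mem_coe, Finset.mem_range] at ha hb
      have := ch_inj (n := 3 * 2 ^ k) (2 ^ t * a) (2 ^ t) (2 ^ t * b) (2 ^ t)
        (pow_pos (by norm_num) _) (pow_pos (by norm_num) _)
        (bound_x ht.2 ha) (bound_x ht.2 hb) (by have := pow_le_aux ht.2; omega) hab
      exact Nat.eq_of_mul_eq_mul_left (pow_pos (by norm_num) _) this.1
  rw [Finset.sum_congr rfl hinner, Finset.sum_const, Nat.card_Icc, smul_eq_mul]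
  have : k + 1 - 1 = k := by omega
  rw [this, mul_comm]

-- ===== layering =====

lemma layers_iff {n : ℕ} (x d : ℕ) (hd : 0 < d) (h2 : 2 * d < n) (hxd : x + d ≤ n)
    (i : ZMod n) :
    LayersEdge (ch n x (x + d)) i ↔ x ≤ i.val ∧ i.val < x + d := by
  have hn : 0 < n := by omega
  haveI : NeZero n := ⟨by omega⟩
  have hvi : i.val < n := ZMod.val_lt i
  have vd1 := vd_eq x d hd (by omega) hxd
  have vd2 := vd_eq' x d hd (by omega) hxd
  have hvx : ((x : ℕ) : ZMod n).val = x := by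
    rw [ZMod.val_natCast, Nat.mod_eq_of_lt (by omega)]
  have hiv : ((i : ZMod n) - ((x : ℕ) : ZMod n)).val = (i.val + n - x) % n := by
    rw [zsub_val hn i _, hvx]
  constructor
  · rintro ⟨a, b, hab, hlt, hi⟩
    rw [ch, Sym2.eq_iff] at hab
    rcases hab with ⟨ha, hb⟩ | ⟨ha, hb⟩
    · subst ha; subst hb
      rw [vd1] at hi
      rw [hiv, redm hvi (by omega)] at hi
      rcases le_or_gt x i.val with h | h
      · rw [if_pos h] at hi; omega
      · rw [if_neg (by omega)] at hi; omega
    · subst ha; subst hb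
      rw [vd1, vd2] at hlt
      omega
  · rintro ⟨h1a, h1b⟩
    refine ⟨((x : ℕ) : ZMod n), ((x + d : ℕ) : ZMod n), rfl, ?_, ?_⟩
    · rw [vd1, vd2]; omega
    · rw [vd1, hiv, redm hvi (by omega), if_pos h1a]; omega

lemma balT_noDiam (k : ℕ) : ∀ p ∈ balT k, ¬ IsDiameter p := by
  intro p hp
  obtain ⟨t, a, ht1, ht2, ha, rfl⟩ := mem_balT.mp hp
  rw [IsDiameter]
  have hlen : chordLen (ch (3 * 2 ^ k) (2 ^ t * a) (2 ^ t * a + 2 ^ t)) = 2 ^ t :=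
    chordLen_ch (2 ^ t * a) (2 ^ t) (pow_pos (by norm_num) _)
      (pow_le_aux ht2) (bound_x ht2 ha)
  rw [hlen]
  have := pow_le_aux ht2
  omega

lemma balT_mT (k : ℕ) (i : ZMod (3 * 2 ^ k)) :
    2 * (Finset.filter (fun p => LayersEdge p i ∧ ¬ IsDiameter p) (balT k)).card +
      (Finset.filter (fun p => IsDiameter p) (balT k)).card = 2 * k := by
  haveI : NeZero (3 * 2 ^ k) := ⟨by positivity⟩
  have hdiam : Finset.filter (fun p => IsDiameter p) (balT k) = ∅ :=
    Finset.filter_eq_empty_iff.mpr (fun p hp => balT_noDiam k p hp)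
  have hcongr : Finset.filter (fun p => LayersEdge p i ∧ ¬ IsDiameter p) (balT k) =
      Finset.filter (fun p => LayersEdge p i) (balT k) := by
    apply Finset.filter_congr
    intro p hp
    have := balT_noDiam k p hp
    tauto
  rw [hdiam, hcongr, Finset.card_empty, Nat.add_zero]
  congr 1
  have hdisj : ∀ x ∈ Finset.Icc 1 k, ∀ y ∈ Finset.Icc 1 k, x ≠ y →
      Disjoint (Finset.filter (fun p => LayersEdge p i) (level k x))
        (Finset.filter (fun p => LayersEdge p i) (level k y)) := by
    intro x hx y hy hxy
    exact (level_disj x hx y hy hxy).mono (Finset.filter_subset _ _)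
      (Finset.filter_subset _ _)
  rw [balT, Finset.filter_biUnion, Finset.card_biUnion hdisj]
  have hone : ∀ t ∈ Finset.Icc 1 k,
      (Finset.filter (fun p => LayersEdge p i) (level k t)).card = 1 := by
    intro t ht
    rw [Finset.mem_Icc] at ht
    have hdp : 0 < 2 ^ t := pow_pos (by norm_num) _
    have hvi : i.val < 3 * 2 ^ k := ZMod.val_lt i
    have hprod : 3 * 2 ^ (k - t) * 2 ^ t = 3 * 2 ^ k := by
      rw [mul_assoc, ← pow_add, Nat.sub_add_cancel ht.2]
    rw [level, Finset.filter_image]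
    have hfc : Finset.filter
        (fun a => LayersEdge (ch (3 * 2 ^ k) (2 ^ t * a) (2 ^ t * a + 2 ^ t)) i)
        (Finset.range (3 * 2 ^ (k - t))) = {i.val / 2 ^ t} := by
      ext a
      simp only [Finset.mem_filter, Finset.mem_range, Finset.mem_singleton]
      constructor
      · rintro ⟨ha, hl⟩
        rw [layers_iff _ _ hdp (pow_le_aux ht.2) (bound_x ht.2 ha)] at hl
        have h1 : a ≤ i.val / 2 ^ t := (Nat.le_div_iff_mul_le hdp).mpr (by
          have e : a * 2 ^ t = 2 ^ t * a := by ring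
          omega)
        have h2 : i.val / 2 ^ t < a + 1 := (Nat.div_lt_iff_lt_mul hdp).mpr (by
          have e : (a + 1) * 2 ^ t = 2 ^ t * a + 2 ^ t := by ring
          omega)
        omega
      · rintro rfl
        have hin : i.val / 2 ^ t < 3 * 2 ^ (k - t) := by
          rw [Nat.div_lt_iff_lt_mul hdp]
          omega
        refine ⟨hin, ?_⟩
        rw [layers_iff _ _ hdp (pow_le_aux ht.2) (bound_x ht.2 hin)]
        constructor
        · have h3 := Nat.div_mul_le_self i.val (2 ^ t)
          have e : (i.val / 2 ^ t) * 2 ^ t = 2 ^ t * (i.val / 2 ^ t) := by ring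
          omega
        · have h3 := (Nat.div_lt_iff_lt_mul hdp).mp
            (show i.val / 2 ^ t < i.val / 2 ^ t + 1 by omega)
          have e : (i.val / 2 ^ t + 1) * 2 ^ t = 2 ^ t * (i.val / 2 ^ t) + 2 ^ t := by
            ring
          omega
    rw [hfc, Finset.image_singleton, Finset.card_singleton]
  rw [Finset.sum_congr rfl hone, Finset.sum_const, Nat.card_Icc, smul_eq_mul, mul_one]
  omega
-- pointwise helpers
lemma cast_down (j N : ℕ) :
    (((N : ZMod (2 * (3 * 2 ^ j))).val : ℕ) : ZMod (3 * 2 ^ (j + 1))) =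
      (N : ZMod (3 * 2 ^ (j + 1))) := by
  have hm : 2 * (3 * 2 ^ j) = 3 * 2 ^ (j + 1) := by ring
  rw [ZMod.val_natCast, hm, ZMod.natCast_mod]

lemma cast_double (j X : ℕ) :
    ((((2 * ((X : ZMod (3 * 2 ^ j)).val) : ℕ) : ZMod (2 * (3 * 2 ^ j))).val : ℕ) :
        ZMod (3 * 2 ^ (j + 1))) = ((2 * X : ℕ) : ZMod (3 * 2 ^ (j + 1))) := by
  have hm : 2 * (3 * 2 ^ j) = 3 * 2 ^ (j + 1) := by ring
  have hmod : (2 * (X % (3 * 2 ^ j))) % (2 * (3 * 2 ^ j)) =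
      (2 * X) % (2 * (3 * 2 ^ j)) :=
    Nat.ModEq.mul_left' 2 (Nat.mod_modEq X (3 * 2 ^ j))
  rw [cast_down, ZMod.val_natCast, cast_inj', ← hm]
  exact hmod

lemma balT_double (j : ℕ) :
    balT (j + 1) = (doubleTri (3 * 2 ^ j) (balT j)).image
      (Sym2.map (fun x : ZMod (2 * (3 * 2 ^ j)) =>
        ((x.val : ℕ) : ZMod (3 * 2 ^ (j + 1))))) := by
  rw [doubleTri, Finset.image_union]
  have hB : ((Finset.range (3 * 2 ^ j)).image
        (fun a : ℕ => s(((2 * a : ℕ) : ZMod (2 * (3 * 2 ^ j))),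
          ((2 * a + 2 : ℕ) : ZMod (2 * (3 * 2 ^ j)))))).image
        (Sym2.map (fun x : ZMod (2 * (3 * 2 ^ j)) =>
          ((x.val : ℕ) : ZMod (3 * 2 ^ (j + 1))))) = level (j + 1) 1 := by
    rw [Finset.image_image, level]
    apply Finset.image_congr
    intro a _
    simp only [Function.comp_apply, Sym2.map_pair_eq, ch]
    rw [cast_down, cast_down]
    have e1 : 2 * a = 2 ^ 1 * a := by ring
    have e2 : 2 * a + 2 = 2 ^ 1 * a + 2 ^ 1 := by ring
    rw [e2, e1]
  have hA : ((balT j).image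
        (Sym2.map (fun a : ZMod (3 * 2 ^ j) =>
          ((2 * a.val : ℕ) : ZMod (2 * (3 * 2 ^ j)))))).image
        (Sym2.map (fun x : ZMod (2 * (3 * 2 ^ j)) =>
          ((x.val : ℕ) : ZMod (3 * 2 ^ (j + 1))))) =
      (Finset.Icc 2 (j + 1)).biUnion (level (j + 1)) := by
    rw [Finset.image_image, balT, Finset.biUnion_image]
    have hidx : Finset.Icc 2 (j + 1) = (Finset.Icc 1 j).image (fun t => t + 1) := by
      ext x
      simp only [Finset.mem_Icc, Finset.mem_image]
      constructor
      · rintro ⟨h1, h2⟩; exact ⟨x - 1, by omega, by omega⟩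
      · rintro ⟨y, hy, rfl⟩; omega
    rw [hidx, Finset.image_biUnion]
    apply Finset.biUnion_congr rfl
    intro t ht
    rw [Finset.mem_Icc] at ht
    rw [level, level, Finset.image_image]
    have hsub : j + 1 - (t + 1) = j - t := by omega
    rw [hsub]
    apply Finset.image_congr
    intro a _
    simp only [Function.comp_apply, ch, Sym2.map_pair_eq]
    rw [cast_double, cast_double]
    have e1 : 2 * (2 ^ t * a) = 2 ^ (t + 1) * a := by ring
    have e2 : 2 * (2 ^ t * a + 2 ^ t) = 2 ^ (t + 1) * a + 2 ^ (t + 1) := by ring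
    rw [e1, e2]
  rw [hA, hB]
  have hsplit : Finset.Icc 1 (j + 1) = insert 1 (Finset.Icc 2 (j + 1)) := by
    ext x
    simp only [Finset.mem_Icc, Finset.mem_insert]
    omega
  rw [balT, hsplit, Finset.biUnion_insert, Finset.union_comm]

/-- For `k ≥ 0` and `n = 3·2^k`, there is a triangulation `T` of the `n`-gon
in which every boundary edge has doubled layer number exactly `2k`, so
`TCL(T) = n·k = n(k+2) - 3·2^(k+1)`; moreover, for `k = j + 1 ≥ 1` such a `T` is obtained from
a triangulation of the `3·2^j`-gon with all layer numbers at most `j` by subdividing every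
boundary edge and adding the chord over each new vertex (the doubling construction). -/
theorem balanced_triangulation_exists (k : ℕ) :
    ∃ T : Finset (Sym2 (ZMod (3 * 2 ^ k))), IsTriangulation (3 * 2 ^ k) T ∧
      (∀ i : ZMod (3 * 2 ^ k), mT (3 * 2 ^ k) T i = 2 * k) ∧
      TCL (3 * 2 ^ k) T = 3 * 2 ^ k * k ∧
      3 * 2 ^ k * k = 3 * 2 ^ k * (k + 2) - 3 * 2 ^ (k + 1) ∧
      (∀ j : ℕ, k = j + 1 →
        ∃ T₀ : Finset (Sym2 (ZMod (3 * 2 ^ j))), IsTriangulation (3 * 2 ^ j) T₀ ∧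
          (∀ i : ZMod (3 * 2 ^ j), mT (3 * 2 ^ j) T₀ i ≤ 2 * j) ∧
          T = (doubleTri (3 * 2 ^ j) T₀).image
                (Sym2.map (fun x => ((x.val : ℕ) : ZMod (3 * 2 ^ k))))) := by
  refine ⟨balT k, ?_, ?_, ?_, ?_, ?_⟩
  · obtain ⟨h1, h2, h3⟩ := balT_isTri k
    exact ⟨h1, h2, h3⟩
  · intro i
    exact balT_mT k i
  · exact balT_tcl k
  · have h : 3 * 2 ^ k * (k + 2) = 3 * 2 ^ k * k + 3 * 2 ^ (k + 1) := by ring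
    omega
  · intro j hj
    subst hj
    refine ⟨balT j, ?_, ?_, balT_double j⟩
    · obtain ⟨h1, h2, h3⟩ := balT_isTri j
      exact ⟨h1, h2, h3⟩
    · intro i
      exact le_of_eq (balT_mT j i)
end
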